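/- For every x in the open interval (r₊, ∞), the function h is differentiable at x with derivative h'(x) = ( 2·(r² − x²)·Δ(r)·( (x − M)³ + M·(M² − a² − Q² + l²) ) ) / ( √(Δ(x)·Δ(r)) · ( (r² − x²)·Δ'(x)/2 + 2x·Δ(x) )² ). -/

import Mathlib

theorem stmt_6 (M a l Q rp r : ℝ) (Δ h : ℝ → ℝ)
    (hM : 0 < M) (ha : 0 < a) (hsub : 0 < M^2 - a^2 + l^2 - Q^2)
    (hΔ : ∀ x, Δ x = x^2 - 2*M*x + a^2 - l^2 + Q^2)
    (hrp : rp = M + Real.sqrt (M^2 - a^2 + l^2 - Q^2))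
    (hr : rp < r)
    (hh : ∀ x, h x = 4*x*Real.sqrt (Δ r * Δ x) /
        ((2*x - 2*M)*(r^2 - x^2) + 4*x*Δ x)) :
    ∀ x ∈ Set.Ioi rp,
      HasDerivAt h
        ((2*(r^2 - x^2) * Δ r * ((x - M)^3 + M*(M^2 - a^2 - Q^2 + l^2))) /
          (Real.sqrt (Δ x * Δ r) * ((r^2 - x^2)*(2*x - 2*M)/2 + 2*x*Δ x)^2)) x := by
  intro x hx
  simp only [Set.mem_Ioi] at hx
  obtain ⟨c, hc⟩ : ∃ c : ℝ, c = a^2 - l^2 + Q^2 := ⟨_, rfl⟩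
  have hΔc : ∀ y : ℝ, Δ y = y^2 - 2*M*y + c := fun y => by rw [hΔ, hc]; ring
  have hk : (0:ℝ) < M^2 - c := by rw [hc]; linarith
  have hsq : Real.sqrt (M^2 - a^2 + l^2 - Q^2) ^ 2 = M^2 - c := by
    rw [Real.sq_sqrt (by linarith), hc]; ring
  have hsnn : (0:ℝ) ≤ Real.sqrt (M^2 - a^2 + l^2 - Q^2) := Real.sqrt_nonneg _
  have hxM : Real.sqrt (M^2 - a^2 + l^2 - Q^2) < x - M := by rw [hrp] at hx; linarith
  have hrM : Real.sqrt (M^2 - a^2 + l^2 - Q^2) < r - M := by rw [hrp] at hr; linarith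
  have hΔx : 0 < Δ x := by rw [hΔc]; nlinarith [hsq, hsnn, hxM]
  have hΔr : 0 < Δ r := by rw [hΔc]; nlinarith [hsq, hsnn, hrM]
  have hprod : M^2 - c < (x - M) * (r - M) := by nlinarith [hsq, hsnn, hxM, hrM]
  have hxMpos : 0 < x - M := lt_of_le_of_lt hsnn hxM
  have hDpos : 0 < (2*x - 2*M)*(r^2 - x^2) + 4*x*Δ x := by
    have hid : (2*x - 2*M)*(r^2 - x^2) + 4*x*Δ x
        = 2*(x-M)*Δ r + 2*(x-M)*Δ x + 4*M*((x-M)*(r-M) - (M^2 - c)) := by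
      rw [hΔc x, hΔc r]; ring
    rw [hid]
    have h1 := mul_pos hxMpos hΔr
    have h2 := mul_pos hxMpos hΔx
    nlinarith
  have hDne : (2*x - 2*M)*(r^2 - x^2) + 4*x*Δ x ≠ 0 := ne_of_gt hDpos
  have hsprod : 0 < Δ r * Δ x := mul_pos hΔr hΔx
  have hs : 0 < Real.sqrt (Δ r * Δ x) := Real.sqrt_pos.mpr hsprod
  have hs2 : Real.sqrt (Δ r * Δ x) ^ 2 = Δ r * Δ x := Real.sq_sqrt hsprod.le
  have h1 : HasDerivAt (fun y : ℝ => y^2 - 2*M*y + c) (2*x - 2*M) x := by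
    have h0 := ((hasDerivAt_pow 2 x).sub ((hasDerivAt_id x).const_mul (2*M))).add_const c
    convert h0 using 1
    · rfl
    · rfl
    · rfl
    · ring
  have h2 : HasDerivAt (fun y : ℝ => Δ r * (y^2 - 2*M*y + c)) (Δ r * (2*x - 2*M)) x :=
    h1.const_mul (Δ r)
  have hxc : x^2 - 2*M*x + c = Δ x := (hΔc x).symm
  have h3 : HasDerivAt (fun y : ℝ => Real.sqrt (Δ r * (y^2 - 2*M*y + c)))
      (Δ r * (2*x - 2*M) / (2 * Real.sqrt (Δ r * Δ x))) x := by
    have h0 := h2.sqrt (x := x) (by rw [hxc]; exact hsprod.ne')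
    rwa [hxc] at h0
  have hN : HasDerivAt (fun y : ℝ => 4*y*Real.sqrt (Δ r * (y^2 - 2*M*y + c)))
      (4*Real.sqrt (Δ r * Δ x) + 4*x*(Δ r * (2*x - 2*M) / (2 * Real.sqrt (Δ r * Δ x)))) x := by
    have h4 : HasDerivAt (fun y : ℝ => 4*y) 4 x := by
      simpa using (hasDerivAt_id x).const_mul (4:ℝ)
    have h0 := h4.mul h3
    rw [hxc] at h0
    convert h0 using 1
    · rfl
    · rfl
    · rfl
  have hDen : HasDerivAt (fun y : ℝ => (2*y - 2*M)*(r^2 - y^2) + 4*y*(y^2 - 2*M*y + c))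
      (2*(r^2 - x^2) + (2*x - 2*M)*(-(2*x)) + (4*(x^2-2*M*x+c) + 4*x*(2*x - 2*M))) x := by
    have hA : HasDerivAt (fun y : ℝ => 2*y - 2*M) 2 x := by
      simpa using ((hasDerivAt_id x).const_mul (2:ℝ)).sub_const (2*M)
    have hB : HasDerivAt (fun y : ℝ => r^2 - y^2) (-(2*x)) x := by
      have h0 := (hasDerivAt_pow 2 x).const_sub (r^2)
      simpa using h0
    have hC : HasDerivAt (fun y : ℝ => 4*y) 4 x := by
      simpa using (hasDerivAt_id x).const_mul (4:ℝ)
    have h0 := (hA.mul hB).add (hC.mul h1)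
    convert h0 using 1
    · rfl
    · rfl
    · rfl
  have hfull := hN.div hDen (by rw [hxc]; exact hDne)
  have hfun : h = fun y : ℝ => (4*y*Real.sqrt (Δ r * (y^2 - 2*M*y + c))) /
      ((2*y - 2*M)*(r^2 - y^2) + 4*y*(y^2 - 2*M*y + c)) := by
    funext y; rw [hh y, hΔc y]
  rw [hfun]
  convert hfull using 1
  · rfl
  · rfl
  · rfl
  rw [hxc, mul_comm (Δ x) (Δ r)]
  have hMc : M^2 - a^2 - Q^2 + l^2 = M^2 - c := by rw [hc]; ring
  rw [hMc]
  set s := Real.sqrt (Δ r * Δ x) with hsdef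
  set P := Δ x with hP
  set R := Δ r with hR
  have hPc : P = x^2 - 2*M*x + c := hΔc x
  -- middle expression
  have mid : (2*(r^2 - x^2) * R * ((x - M)^3 + M*(M^2 - c))) /
        (s * ((r^2 - x^2)*(2*x - 2*M)/2 + 2*x*P)^2)
      = ((4*R*P + 4*x*(x-M)*R) * ((2*x - 2*M)*(r^2 - x^2) + 4*x*P)
          - 4*x*(R*P) * (2*(r^2 - x^2) + (2*x - 2*M)*(-(2*x)) + (4*P + 4*x*(2*x - 2*M)))) /
        (s * ((2*x - 2*M)*(r^2 - x^2) + 4*x*P)^2) := by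
    have hEpos : 0 < (r^2 - x^2)*(2*x - 2*M)/2 + 2*x*P := by nlinarith [hDpos]
    rw [div_eq_div_iff (by positivity) (by positivity)]
    rw [hPc]
    ring
  have key : s * ((4*s + 4*x*(R*(2*x - 2*M)/(2*s))) * ((2*x - 2*M)*(r^2 - x^2) + 4*x*P)
        - 4*x*s * (2*(r^2 - x^2) + (2*x - 2*M)*(-(2*x)) + (4*P + 4*x*(2*x - 2*M))))
      = (4*R*P + 4*x*(x-M)*R) * ((2*x - 2*M)*(r^2 - x^2) + 4*x*P)
          - 4*x*(R*P) * (2*(r^2 - x^2) + (2*x - 2*M)*(-(2*x)) + (4*P + 4*x*(2*x - 2*M))) := by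
    field_simp
    linear_combination ((4*((2*x - 2*M)*(r^2 - x^2) + 4*x*P)
      - 4*x*(2*(r^2 - x^2) + (2*x - 2*M)*(-(2*x)) + (4*P + 4*x*(2*x - 2*M))))
      + 6*(2*x^3 - 3*x^2*M + M*r^2)) * hs2
  rw [mid, ← key, mul_div_mul_left _ _ hs.ne']
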